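/- Let λ be a standard half-Cauchy random variable (density 2/(π(1+x²)) on (0,∞)) and let Z be a standard normal random variable independent of λ. There exists a universal constant c > 0 (one may take c = 2e^{−2}/(5π√(2π))) such that for all A ≥ 1, all τ with 0 < τ ≤ 1, all δ₀ with 0 < δ₀ ≤ A, and all β₀ ∈ ℝ with |β₀| ≤ A: P(|τ·λ·Z − β₀| ≤ δ₀) ≥ c · τ · δ₀ / A². -/

import Mathlib

open MeasureTheory ProbabilityTheory
open scoped ENNReal NNReal

/-- The standard half-Cauchy distribution `Ca⁺(0,1)`: density `2/(π(1+x²))` on `(0,∞)`. -/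
noncomputable def halfCauchy : Measure ℝ :=
  volume.withDensity fun x => ENNReal.ofReal (if 0 < x then 2 / (Real.pi * (1 + x ^ 2)) else 0)

lemma density_Icc_lower (f : ℝ → ℝ≥0∞) (hf : Measurable f) (a b : ℝ) (c : ℝ≥0∞)
    (h : ∀ x ∈ Set.Icc a b, c ≤ f x) :
    c * ENNReal.ofReal (b - a) ≤ volume.withDensity f (Set.Icc a b) := by
  rw [withDensity_apply _ measurableSet_Icc]
  calc c * ENNReal.ofReal (b - a) = ∫⁻ _ in Set.Icc a b, c := by
        rw [setLIntegral_const, Real.volume_Icc]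
    _ ≤ ∫⁻ x in Set.Icc a b, f x := setLIntegral_mono' measurableSet_Icc h

lemma gauss_lower (a b : ℝ) (h2a : -2 ≤ a) (hb2 : b ≤ 2) :
    ENNReal.ofReal (Real.exp (-2) / Real.sqrt (2 * Real.pi) * (b - a)) ≤
      gaussianReal 0 1 (Set.Icc a b) := by
  rw [gaussianReal_of_var_ne_zero 0 one_ne_zero]
  refine le_trans ?_ (density_Icc_lower (gaussianPDF 0 1) (measurable_gaussianPDF 0 1) a b
    (ENNReal.ofReal (Real.exp (-2) / Real.sqrt (2 * Real.pi))) ?_)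
  · rw [← ENNReal.ofReal_mul (by positivity)]
  · intro x hx
    rw [gaussianPDF, gaussianPDFReal]
    apply ENNReal.ofReal_le_ofReal
    have hx2 : x ^ 2 ≤ 4 := by
      nlinarith [hx.1, hx.2]
    have hsq : (0:ℝ) < Real.sqrt (2 * Real.pi) := Real.sqrt_pos.mpr (by positivity)
    simp only [NNReal.coe_one, mul_one, sub_zero]
    rw [div_eq_inv_mul]
    gcongr
    linarith

lemma halfCauchy_lower (A τ : ℝ) (hA : 1 ≤ A) (hτ1 : 0 < τ) (hτ2 : τ ≤ 1) :
    ENNReal.ofReal (2 * τ / (5 * Real.pi * A)) ≤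
      halfCauchy (Set.Icc (A / τ) (2 * A / τ)) := by
  have hπ := Real.pi_pos
  have hApos : (0:ℝ) < A := lt_of_lt_of_le one_pos hA
  have hmeas : Measurable fun x : ℝ =>
      ENNReal.ofReal (if 0 < x then 2 / (Real.pi * (1 + x ^ 2)) else 0) := by
    apply Measurable.ennreal_ofReal
    apply Measurable.ite measurableSet_Ioi (by fun_prop) measurable_const
  have key := density_Icc_lower _ hmeas (A / τ) (2 * A / τ)
    (ENNReal.ofReal (2 * τ ^ 2 / (5 * Real.pi * A ^ 2))) ?_
  · refine le_trans ?_ key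
    have h1 : 2 * A / τ - A / τ = A / τ := by field_simp; ring
    rw [h1, ← ENNReal.ofReal_mul (by positivity)]
    apply ENNReal.ofReal_le_ofReal
    rw [div_mul_div_comm]
    rw [div_le_div_iff₀ (by positivity) (by positivity)]
    ring_nf
    nlinarith
  · intro x hx
    have hx1 : A / τ ≤ x := hx.1
    have hx2 : x ≤ 2 * A / τ := hx.2
    have hxpos : 0 < x := lt_of_lt_of_le (by positivity) hx1
    rw [if_pos hxpos]
    apply ENNReal.ofReal_le_ofReal
    have hAτ : 1 ≤ A / τ := le_trans hA (by
      rw [le_div_iff₀ hτ1]; nlinarith)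
    have hxub : x ^ 2 ≤ 4 * A ^ 2 / τ ^ 2 := by
      have : x ^ 2 ≤ (2 * A / τ) ^ 2 := by nlinarith
      calc x ^ 2 ≤ (2 * A / τ) ^ 2 := this
        _ = 4 * A ^ 2 / τ ^ 2 := by ring
    rw [div_le_div_iff₀ (by positivity) (by positivity)]
    have hτ2pos : 0 < τ ^ 2 := by positivity
    have hx4 : x ^ 2 * τ ^ 2 ≤ 4 * A ^ 2 := (le_div_iff₀ hτ2pos).mp hxub
    have hτA : τ ^ 2 ≤ A ^ 2 := by nlinarith
    have hkey : τ ^ 2 * (1 + x ^ 2) ≤ 5 * A ^ 2 := by nlinarith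
    nlinarith [mul_le_mul_of_nonneg_left hkey hπ.le]

/-- small-ball lower bound for the horseshoe-type scale mixture: if
`λ ~ Ca⁺(0,1)` and `Z ~ N(0,1)` are independent, then with the universal constant
`c = 2e^{−2}/(5π√(2π)) > 0`, for all `A ≥ 1`, `0 < τ ≤ 1`, `0 < δ₀ ≤ A`, `|β₀| ≤ A`:
`P(|τλZ − β₀| ≤ δ₀) ≥ c·τ·δ₀/A²`. -/
theorem stmt_5 (A τ δ0 β0 : ℝ) (hA : 1 ≤ A) (hτ1 : 0 < τ) (hτ2 : τ ≤ 1)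
    (hδ1 : 0 < δ0) (hδ2 : δ0 ≤ A) (hβ : |β0| ≤ A) :
    ENNReal.ofReal
        (2 * Real.exp (-2) / (5 * Real.pi * Real.sqrt (2 * Real.pi)) * τ * δ0 / A ^ 2) ≤
      (halfCauchy.prod (gaussianReal 0 1)) {x : ℝ × ℝ | |τ * x.1 * x.2 - β0| ≤ δ0} := by
  have hπ := Real.pi_pos
  have hsqπ : (0:ℝ) < Real.sqrt (2 * Real.pi) := Real.sqrt_pos.mpr (by positivity)
  have hApos : (0:ℝ) < A := lt_of_lt_of_le one_pos hA
  set S : Set (ℝ × ℝ) := {x : ℝ × ℝ | |τ * x.1 * x.2 - β0| ≤ δ0} with hSdef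
  have hS : MeasurableSet S := by
    apply measurableSet_le ?_ measurable_const
    fun_prop
  set I : Set ℝ := Set.Icc (A / τ) (2 * A / τ) with hIdef
  set g : ℝ≥0∞ := ENNReal.ofReal (Real.exp (-2) / Real.sqrt (2 * Real.pi) * (δ0 / A)) with hgdef
  -- slice bound
  have key : ∀ l ∈ I, g ≤ gaussianReal 0 1 (Prod.mk l ⁻¹' S) := by
    intro l hl
    have hl1 : A / τ ≤ l := hl.1
    have hl2 : l ≤ 2 * A / τ := hl.2
    have hτl1 : A ≤ τ * l := by rw [← div_le_iff₀' hτ1]; exact hl1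
    have hτl2 : τ * l ≤ 2 * A := by rw [mul_comm, ← le_div_iff₀ hτ1]; exact hl2
    have hτlpos : 0 < τ * l := lt_of_lt_of_le hApos hτl1
    set u := (β0 - δ0) / (τ * l) with hu
    set v := (β0 + δ0) / (τ * l) with hv
    have hβ1 : -A ≤ β0 := (abs_le.mp hβ).1
    have hβ2 : β0 ≤ A := (abs_le.mp hβ).2
    have h2u : -2 ≤ u := by
      rw [hu, le_div_iff₀ hτlpos]
      nlinarith
    have hv2 : v ≤ 2 := by
      rw [hv, div_le_iff₀ hτlpos]
      nlinarith
    have hsub : Set.Icc u v ⊆ Prod.mk l ⁻¹' S := by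
      intro z hz
      simp only [Set.mem_preimage, hSdef, Set.mem_setOf_eq, abs_le]
      have hz1 : (β0 - δ0) / (τ * l) ≤ z := hz.1
      have hz2 : z ≤ (β0 + δ0) / (τ * l) := hz.2
      rw [div_le_iff₀ hτlpos] at hz1
      rw [le_div_iff₀ hτlpos] at hz2
      constructor <;> nlinarith
    calc g ≤ ENNReal.ofReal (Real.exp (-2) / Real.sqrt (2 * Real.pi) * (v - u)) := by
          apply ENNReal.ofReal_le_ofReal
          have hvu : δ0 / A ≤ v - u := by
            rw [hv, hu, div_sub_div_same, le_div_iff₀ hτlpos]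
            have : β0 + δ0 - (β0 - δ0) = 2 * δ0 := by ring
            rw [this, div_mul_eq_mul_div, div_le_iff₀ hApos]
            nlinarith
          have : (0:ℝ) ≤ Real.exp (-2) / Real.sqrt (2 * Real.pi) := by positivity
          nlinarith
      _ ≤ gaussianReal 0 1 (Set.Icc u v) := gauss_lower u v h2u hv2
      _ ≤ gaussianReal 0 1 (Prod.mk l ⁻¹' S) := measure_mono hsub
  calc ENNReal.ofReal
        (2 * Real.exp (-2) / (5 * Real.pi * Real.sqrt (2 * Real.pi)) * τ * δ0 / A ^ 2)
      = g * ENNReal.ofReal (2 * τ / (5 * Real.pi * A)) := by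
        rw [hgdef, ← ENNReal.ofReal_mul (by positivity)]
        congr 1
        field_simp
    _ ≤ g * halfCauchy I := by
        exact mul_le_mul_right (halfCauchy_lower A τ hA hτ1 hτ2) g
    _ = ∫⁻ _ in I, g ∂halfCauchy := by rw [setLIntegral_const]
    _ ≤ ∫⁻ l in I, gaussianReal 0 1 (Prod.mk l ⁻¹' S) ∂halfCauchy :=
        setLIntegral_mono' measurableSet_Icc key
    _ ≤ ∫⁻ l, gaussianReal 0 1 (Prod.mk l ⁻¹' S) ∂halfCauchy :=
        setLIntegral_le_lintegral _ _
    _ = (halfCauchy.prod (gaussianReal 0 1)) S := (Measure.prod_apply hS).symm
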